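/- Let $X$ be a finite subset of $\mathbb{A}^s = K^s$ over a field $K$, let $I(X)$ be its vanishing ideal, and let $F$ be a finite subset of $S = K[t_1,\ldots,t_s]$. Then $|V_X(F)| = \deg(S/(I(X),F))$ if $(I(X) : (F)) \neq I(X)$, and $|V_X(F)| = 0$ if $(I(X) : (F)) = I(X)$. -/

import Mathlib

open MvPolynomial
open scoped MonomialOrder

variable {K : Type*} [Field K] {s : ℕ}

/-- The exponent of the initial (leading) monomial of `f` with respect to the
monomial order `m` (it is `0` for `f = 0`). -/
noncomputable def leadExp (m : MonomialOrder (Fin s)) (f : MvPolynomial (Fin s) K) :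
    Fin s →₀ ℕ :=
  m.toSyn.symm (f.support.sup fun a => m.toSyn a)

/-- The coefficient of the initial monomial of `f`; `f` is monic when this is `1`. -/
noncomputable def leadCoeff (m : MonomialOrder (Fin s)) (f : MvPolynomial (Fin s) K) : K :=
  f.coeff (leadExp m f)

/-- The initial monomial `in_≺(f)` of `f`, as a (monic) monomial of the polynomial ring. -/
noncomputable def leadMon (m : MonomialOrder (Fin s)) (f : MvPolynomial (Fin s) K) :
    MvPolynomial (Fin s) K :=
  monomial (leadExp m f) (1 : K)

/-- The initial ideal `in_≺(I)` of an ideal `I`: the ideal generated by the initial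
monomials of the nonzero elements of `I`. -/
noncomputable def initialIdeal (m : MonomialOrder (Fin s)) (I : Ideal (MvPolynomial (Fin s) K)) :
    Ideal (MvPolynomial (Fin s) K) :=
  Ideal.span { g | ∃ f ∈ I, f ≠ 0 ∧ g = leadMon m f }

/-- The footprint `Δ_≺(I)` of `S/I`: the set of standard monomials, i.e. the (monic)
monomials that do not belong to the initial ideal of `I`. -/
noncomputable def stdMonomials (m : MonomialOrder (Fin s)) (I : Ideal (MvPolynomial (Fin s) K)) :
    Set (MvPolynomial (Fin s) K) :=
  { g | (∃ a : Fin s →₀ ℕ, g = monomial a (1 : K)) ∧ g ∉ initialIdeal m I }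

/-- `KΔ_≺(I)`, the `K`-linear span of the standard monomials of `S/I`. -/
noncomputable def stdSpan (m : MonomialOrder (Fin s)) (I : Ideal (MvPolynomial (Fin s) K)) :
    Submodule K (MvPolynomial (Fin s) K) :=
  Submodule.span K (stdMonomials m I)

/-- A monomial order is graded if monomials are first compared by their total degrees. -/
def IsGradedOrder (m : MonomialOrder (Fin s)) : Prop :=
  ∀ a b : Fin s →₀ ℕ, a.degree < b.degree → a ≺[m] b

/-- The vanishing ideal `I(X)` of a set of points `X ⊆ 𝔸^s = K^s`. -/
def affVanishingIdeal (X : Set (Fin s → K)) : Ideal (MvPolynomial (Fin s) K) where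
  carrier := { f | ∀ x ∈ X, eval x f = 0 }
  add_mem' := by
    intro a b ha hb x hx
    simp [ha x hx, hb x hx]
  zero_mem' := by intro x hx; simp
  smul_mem' := by
    intro c f hf x hx
    simp [smul_eq_mul, hf x hx]

/-- The evaluation map `S → K^X`, `f ↦ (f(P₁),…,f(P_m))`, at the points of a finite
set `X` of points of `𝔸^s`. -/
noncomputable def evalMap (X : Finset (Fin s → K)) :
    MvPolynomial (Fin s) K →ₗ[K] (X → K) where
  toFun f := fun x => eval (x : Fin s → K) f
  map_add' f g := by funext x; simp
  map_smul' c f := by funext x; simp [Algebra.smul_def]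

/-- The degree `deg(S/I)`.  For the ideals considered in this paper `S/I` is a
zero-dimensional ring, and its degree (the normalized leading coefficient of the
affine Hilbert polynomial) equals `dim_K (S/I)` (and is `0` when `I = S`). -/
noncomputable def adeg (I : Ideal (MvPolynomial (Fin s) K)) : ℕ :=
  Module.finrank K (MvPolynomial (Fin s) K ⧸ I)

/-- The affine Hilbert function `H_I^a(d) = dim_K (S_{≤d}/I_{≤d})`, computed as the
dimension of the image of `S_{≤d}` in `S/I`. -/
noncomputable def affineHilbert (I : Ideal (MvPolynomial (Fin s) K)) (d : ℕ) : ℕ :=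
  Module.finrank K
    ((restrictTotalDegree (Fin s) K d).map (Submodule.restrictScalars K I).mkQ)

/-- The support `χ(D)` of a subcode `D ⊆ K^ι`. -/
def codeSupport {ι : Type*} (D : Submodule K (ι → K)) : Set ι :=
  { i | ∃ v ∈ D, v i ≠ 0 }

/-- The `r`-th generalized Hamming weight of a linear code `C ⊆ K^ι`: the minimum
size of the support of an `r`-dimensional subcode. -/
noncomputable def ghw {ι : Type*} (C : Submodule K (ι → K)) (r : ℕ) : ℕ :=
  sInf { n | ∃ D : Submodule K (ι → K),
    D ≤ C ∧ Module.finrank K (↥D) = r ∧ (codeSupport D).ncard = n }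

/-- The minimum distance of a linear code: the least Hamming weight of a nonzero
codeword. -/
noncomputable def minDist {ι : Type*} (C : Submodule K (ι → K)) : ℕ :=
  sInf { n | ∃ v ∈ C, v ≠ 0 ∧ ({ i : ι | v i ≠ 0 }).ncard = n }

/-- The affine torus `T = (K^*)^s`. -/
noncomputable def torus (K : Type*) [Field K] [Fintype K] (s : ℕ) : Finset (Fin s → K) :=
  letI := Classical.decEq K
  Finset.univ.filter fun x => ∀ i, x i ≠ 0

/-- `V_d`: the set of squarefree (monic) monomials of degree `d`. -/
def sqfreeMonomials (K : Type*) [Field K] (s d : ℕ) : Set (MvPolynomial (Fin s) K) :=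
  { g | ∃ a : Fin s →₀ ℕ, (∀ i, a i ≤ 1) ∧ a.degree = d ∧ g = monomial a (1 : K) }

/-- `V_{≤d}`: the set of squarefree (monic) monomials of degree at most `d`. -/
def sqfreeMonomialsLe (K : Type*) [Field K] (s d : ℕ) : Set (MvPolynomial (Fin s) K) :=
  { g | ∃ a : Fin s →₀ ℕ, (∀ i, a i ≤ 1) ∧ a.degree ≤ d ∧ g = monomial a (1 : K) }

/-- `V_X(F)`: the affine variety of `F` in `X`. -/
def VX (X : Finset (Fin s → K)) (F : Finset (MvPolynomial (Fin s) K)) : Set (Fin s → K) :=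
  { x | x ∈ X ∧ ∀ f ∈ F, eval x f = 0 }

namespace CardVarietyAux

attribute [local instance] Classical.propDecidable

variable {K : Type*} [Field K] {s : ℕ}

/-- A polynomial separating two distinct points: value `1` at `P`, `0` at `Q`. -/
noncomputable def sep (P Q : Fin s → K) : MvPolynomial (Fin s) K :=
  if h : P = Q then 1
  else C (P (Function.ne_iff.mp h).choose - Q (Function.ne_iff.mp h).choose)⁻¹ *
      (X (Function.ne_iff.mp h).choose - C (Q (Function.ne_iff.mp h).choose))

lemma eval_sep_self {P Q : Fin s → K} (h : P ≠ Q) : eval P (sep P Q) = 1 := by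
  have hi : P (Function.ne_iff.mp h).choose ≠ Q (Function.ne_iff.mp h).choose :=
    (Function.ne_iff.mp h).choose_spec
  rw [sep, dif_neg h]
  simp [inv_mul_cancel₀ (sub_ne_zero.mpr hi)]

lemma eval_sep_ne {P Q : Fin s → K} (h : P ≠ Q) : eval Q (sep P Q) = 0 := by
  rw [sep, dif_neg h]; simp

/-- Indicator polynomial of a point relative to a finite set. -/
noncomputable def indic (Y : Finset (Fin s → K)) (P : Fin s → K) : MvPolynomial (Fin s) K :=
  ∏ Q ∈ Y.erase P, sep P Q

lemma eval_indic_self (Y : Finset (Fin s → K)) (P : Fin s → K) :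
    eval P (indic Y P) = 1 := by
  rw [indic, map_prod]
  exact Finset.prod_eq_one fun Q hQ => eval_sep_self (Ne.symm (Finset.ne_of_mem_erase hQ))

lemma eval_indic_ne {Y : Finset (Fin s → K)} {P Q : Fin s → K} (hQ : Q ∈ Y) (hne : Q ≠ P) :
    eval Q (indic Y P) = 0 := by
  rw [indic, map_prod]
  exact Finset.prod_eq_zero (Finset.mem_erase.mpr ⟨hne, hQ⟩) (eval_sep_ne (Ne.symm hne))

lemma mem_aff {X : Set (Fin s → K)} {f : MvPolynomial (Fin s) K} :
    f ∈ affVanishingIdeal X ↔ ∀ x ∈ X, eval x f = 0 := Iff.rfl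

/-- Evaluation at the points of `V`, as an algebra homomorphism. -/
noncomputable def evalAlg (V : Finset (Fin s → K)) :
    MvPolynomial (Fin s) K →ₐ[K] (↥V → K) where
  toFun f := fun x => eval (x : Fin s → K) f
  map_one' := by funext x; simp
  map_mul' f g := by funext x; simp
  map_zero' := by funext x; simp
  map_add' f g := by funext x; simp
  commutes' c := by funext x; simp [Pi.algebraMap_apply, MvPolynomial.algebraMap_eq]

lemma evalAlg_surj (V : Finset (Fin s → K)) :
    Function.Surjective (evalAlg (K := K) V) := by
  intro v
  refine ⟨∑ P ∈ V.attach, C (v P) * indic V (P : Fin s → K), ?_⟩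
  funext x
  show eval (x : Fin s → K) _ = v x
  rw [map_sum, Finset.sum_eq_single x]
  · simp [eval_indic_self]
  · intro P _ hne
    have hx : (x : Fin s → K) ≠ (P : Fin s → K) := fun h => hne (Subtype.ext h).symm
    simp [eval_indic_ne x.2 hx]
  · intro h; exact absurd (Finset.mem_attach _ x) h

lemma ker_evalAlg (X : Finset (Fin s → K)) (F : Finset (MvPolynomial (Fin s) K))
    (V : Finset (Fin s → K))
    (hV : ∀ x, x ∈ V ↔ x ∈ X ∧ ∀ f ∈ F, eval x f = 0) :
    RingHom.ker (evalAlg (K := K) V) =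
      affVanishingIdeal (X : Set (Fin s → K)) ⊔
        Ideal.span (F : Set (MvPolynomial (Fin s) K)) := by
  apply le_antisymm
  · intro g hg
    have hg0 : ∀ x ∈ V, eval x g = 0 := by
      intro x hx
      have := congrFun (RingHom.mem_ker.mp hg) ⟨x, hx⟩
      simpa [evalAlg] using this
    set J := affVanishingIdeal ((X : Set (Fin s → K))) ⊔
        Ideal.span (F : Set (MvPolynomial (Fin s) K)) with hJ
    have hkey : g - ∑ P ∈ X.attach, C (eval (P : Fin s → K) g) * indic X (P : Fin s → K) ∈
        affVanishingIdeal (X : Set (Fin s → K)) := by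
      rw [mem_aff]
      intro x hx
      have hxX : x ∈ X := hx
      rw [map_sub, map_sum, Finset.sum_eq_single (⟨x, hxX⟩ : {y // y ∈ X})]
      · simp [eval_indic_self, sub_self]
      · intro P _ hne
        have hxP : x ≠ (P : Fin s → K) := fun h => hne (Subtype.ext h).symm
        simp [eval_indic_ne hxX hxP]
      · intro h; exact absurd (Finset.mem_attach _ _) h
    have hterm : ∀ P : {y // y ∈ X},
        C (eval (P : Fin s → K) g) * indic X (P : Fin s → K) ∈ J := by
      intro P
      by_cases hPV : (P : Fin s → K) ∈ V
      · rw [hg0 _ hPV]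
        simp
      · have hPX : (P : Fin s → K) ∈ X := P.2
        obtain ⟨f, hfF, hfP⟩ : ∃ f ∈ F, eval (P : Fin s → K) f ≠ 0 := by
          by_contra hcon
          push_neg at hcon
          exact hPV ((hV _).mpr ⟨hPX, hcon⟩)
        have h1 : indic X (P : Fin s → K) -
            C (eval (P : Fin s → K) f)⁻¹ * f * indic X (P : Fin s → K) ∈
            affVanishingIdeal (X : Set (Fin s → K)) := by
          rw [mem_aff]
          intro x hx
          have hxX : x ∈ X := hx
          by_cases hxP : x = (P : Fin s → K)
          · subst hxP
            simp [eval_indic_self, inv_mul_cancel₀ hfP]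
          · simp [eval_indic_ne hxX hxP]
        have h2 : C (eval (P : Fin s → K) f)⁻¹ * f * indic X (P : Fin s → K) ∈
            Ideal.span (F : Set (MvPolynomial (Fin s) K)) := by
          exact Ideal.mul_mem_right _ _
            (Ideal.mul_mem_left _ _ (Ideal.subset_span hfF))
        have h3 : indic X (P : Fin s → K) ∈ J := by
          have := Ideal.add_mem J (Ideal.mem_sup_left h1) (Ideal.mem_sup_right h2)
          simpa using this
        exact Ideal.mul_mem_left _ _ h3
    have : g = (g - ∑ P ∈ X.attach, C (eval (P : Fin s → K) g) * indic X (P : Fin s → K)) +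
        ∑ P ∈ X.attach, C (eval (P : Fin s → K) g) * indic X (P : Fin s → K) := by ring
    rw [this]
    exact Ideal.add_mem J (Ideal.mem_sup_left hkey) (Ideal.sum_mem J fun P _ => hterm P)
  · rw [sup_le_iff]
    constructor
    · intro g hg
      rw [RingHom.mem_ker]
      funext x
      exact mem_aff.mp hg x ((hV _).mp x.2).1
    · rw [Ideal.span_le]
      intro f hf
      rw [SetLike.mem_coe, RingHom.mem_ker]
      funext x
      exact ((hV _).mp x.2).2 f hf

end CardVarietyAux

/-- Lemma (degree formula for the number of zeros in `X`). -/
theorem card_variety_eq_degree (X : Finset (Fin s → K))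
    (F : Finset (MvPolynomial (Fin s) K)) :
    (Submodule.colon (affVanishingIdeal (X : Set (Fin s → K)))
          (Ideal.span (F : Set (MvPolynomial (Fin s) K))) ≠
        affVanishingIdeal (X : Set (Fin s → K)) →
      (VX X F).ncard =
        adeg (affVanishingIdeal (X : Set (Fin s → K)) ⊔
          Ideal.span (F : Set (MvPolynomial (Fin s) K)))) ∧
    (Submodule.colon (affVanishingIdeal (X : Set (Fin s → K)))
          (Ideal.span (F : Set (MvPolynomial (Fin s) K))) =
        affVanishingIdeal (X : Set (Fin s → K)) →
      (VX X F).ncard = 0) := by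
    classical
  set V : Finset (Fin s → K) := X.filter (fun x => ∀ f ∈ F, eval x f = 0) with hVdef
  have hV : ∀ x, x ∈ V ↔ x ∈ X ∧ ∀ f ∈ F, eval x f = 0 := by
    intro x; simp [hVdef, Finset.mem_filter]
  have hset : VX X F = (V : Set (Fin s → K)) := by
    ext x; simp [VX, hV x]
  have hncard : (VX X F).ncard = V.card := by
    rw [hset, Set.ncard_coe_finset]
  constructor
  · intro _
    have e := Ideal.quotientKerAlgEquivOfSurjective (CardVarietyAux.evalAlg_surj V)
    replace e := (Ideal.quotientEquivAlgOfEq K (CardVarietyAux.ker_evalAlg X F V hV)).symm.trans e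
    rw [hncard]
    unfold adeg
    rw [e.toLinearEquiv.finrank_eq, Module.finrank_pi, Fintype.card_coe]
  · intro hc
    rw [hncard, Finset.card_eq_zero]
    by_contra hne
    obtain ⟨x, hx⟩ := Finset.nonempty_iff_ne_empty.mpr hne
    obtain ⟨hxX, hxF⟩ := (hV x).mp hx
    have hcolon : CardVarietyAux.indic X x ∈
        Submodule.colon (affVanishingIdeal (X : Set (Fin s → K)))
          (Ideal.span (F : Set (MvPolynomial (Fin s) K))) := by
      rw [Submodule.mem_colon]
      intro p hp
      rw [smul_eq_mul]
      rw [CardVarietyAux.mem_aff]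
      intro y hy
      rw [map_mul]
      by_cases hyx : y = x
      · subst hyx
        have hp0 : eval y p = 0 := by
          have hle : Ideal.span (F : Set (MvPolynomial (Fin s) K)) ≤
              RingHom.ker (eval y : MvPolynomial (Fin s) K →+* K) := by
            rw [Ideal.span_le]
            intro f hf
            simp only [SetLike.mem_coe, RingHom.mem_ker]
            exact hxF f hf
          exact hle hp
        rw [hp0, mul_zero]
      · rw [CardVarietyAux.eval_indic_ne hy hyx, zero_mul]
    rw [hc] at hcolon
    have h1 := CardVarietyAux.mem_aff.mp hcolon x hxX
    rw [CardVarietyAux.eval_indic_self] at h1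
    exact one_ne_zero h1
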